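/- Let h_1,…,h_B ∈ ℂ^L and let k ∈ {0,…,N−1}. The range of the per-subcarrier interference map Φ_k : ℂ^{N+P} → ℂ^B, (Φ_k(w))_b = (F · T(h_b) w)_k, equals the column space of the effective jammer channel matrix 𝗝[k] = [√N ĵ[k], R[k]] ∈ ℂ^{B×(P+1)}, where ĵ[k]_b = (F pad(h_b))_k and the b-th row of R[k] is the k-th row of F multiplied by T^(p)(h_b). -/

import Mathlib

open Matrix

/-- The unitary `N`-point DFT matrix. -/
noncomputable def dft (N : ℕ) : Matrix (Fin N) (Fin N) ℂ :=
  Matrix.of fun k n : Fin N =>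
    ((1 / Real.sqrt N : ℝ) : ℂ) *
      Complex.exp (-2 * (Real.pi : ℂ) * Complex.I * ((k : ℕ) : ℂ) * ((n : ℕ) : ℂ) / (N : ℂ))

/-- Cyclic convolution on `ℂ^N`. -/
noncomputable def cconv {N : ℕ} (c x : Fin N → ℂ) : Fin N → ℂ := fun n => ∑ m, c m * x (n - m)

/-- Zero-padding of `h ∈ ℂ^L` to length `N`. -/
noncomputable def pad (N : ℕ) {L : ℕ} (hLN : L ≤ N) (h : Fin L → ℂ) : Fin N → ℂ :=
  fun n => if hn : (n : ℕ) < L then h ⟨n, hn⟩ else 0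

/-- Toeplitz channel matrix `T(h) ∈ ℂ^{N×(N+P)}`. -/
noncomputable def toep (N : ℕ) {L : ℕ} (P : ℕ) (h : Fin L → ℂ) : Matrix (Fin N) (Fin (N + P)) ℂ :=
  Matrix.of fun (n : Fin N) (m : Fin (N + P)) =>
    if hk : 0 ≤ (P : ℤ) + (n : ℕ) - (m : ℕ) ∧ (P : ℤ) + (n : ℕ) - (m : ℕ) ≤ (L : ℤ) - 1
    then h ⟨((P : ℤ) + (n : ℕ) - (m : ℕ)).toNat, by omega⟩ else 0

/-- First `P` columns of `T(h)`. -/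
noncomputable def toepP (N : ℕ) {L : ℕ} (P : ℕ) (h : Fin L → ℂ) : Matrix (Fin N) (Fin P) ℂ :=
  Matrix.of fun n m => toep N P h n ⟨(m : ℕ), by have := m.isLt; omega⟩

/-- Last `N` entries of `w ∈ ℂ^{N+P}`. -/
noncomputable def wStar (N P : ℕ) (w : Fin (N + P) → ℂ) : Fin N → ℂ :=
  fun n => w ⟨P + (n : ℕ), by have := n.isLt; omega⟩

/-- First `P` entries of `w` minus the last `P` entries of `w*`. -/
noncomputable def deltaP (N P : ℕ) (hPN : P ≤ N) (w : Fin (N + P) → ℂ) : Fin P → ℂ :=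
  fun m => w ⟨(m : ℕ), by have := m.isLt; omega⟩ -
    wStar N P w ⟨N - P + (m : ℕ), by have := m.isLt; omega⟩

/-- Cyclic-prefixed sequence: prepend the last `P` entries of `x` to `x`. -/
noncomputable def cyclicPrefix (N P : ℕ) (hPN : P ≤ N) (x : Fin N → ℂ) : Fin (N + P) → ℂ :=
  fun m => if hm : (m : ℕ) < P then x ⟨N - P + (m : ℕ), by omega⟩
           else x ⟨(m : ℕ) - P, by have := m.isLt; omega⟩

/-- Effective jammer channel matrix `𝗝[k] = [√N ĵ[k], R[k]]`. -/
noncomputable def effJ (N : ℕ) {L : ℕ} (P B : ℕ) (hLN : L ≤ N) (h : Fin B → Fin L → ℂ)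
    (k : Fin N) : Matrix (Fin B) (Fin (P + 1)) ℂ :=
  Matrix.of fun b : Fin B =>
    Fin.cons ((Real.sqrt N : ℂ) * (dft N *ᵥ pad N hLN (h b)) k)
      (fun m : Fin P => Matrix.vecMul (dft N k) (toepP N P (h b)) m)


lemma expE_mod (N : ℕ) (hN : 0 < N) (k : Fin N) (t : ℕ) :
    Complex.exp (-2 * (Real.pi : ℂ) * Complex.I * ((k : ℕ) : ℂ) * (((t % N : ℕ)) : ℂ) / (N : ℂ))
      = Complex.exp (-2 * (Real.pi : ℂ) * Complex.I * ((k : ℕ) : ℂ) * ((t : ℕ) : ℂ) / (N : ℂ)) := by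
  have hN' : (N : ℂ) ≠ 0 := Nat.cast_ne_zero.mpr hN.ne'
  conv_rhs => rw [← Nat.mod_add_div t N]
  generalize t / N = q
  generalize t % N = r
  have h1 : ((r + N * q : ℕ) : ℂ) = (r : ℂ) + (N : ℂ) * (q : ℂ) := by push_cast; ring
  rw [h1, show -2 * (Real.pi : ℂ) * Complex.I * ((k : ℕ) : ℂ) *
      ((r : ℂ) + (N : ℂ) * (q : ℂ)) / (N : ℂ)
      = -2 * (Real.pi : ℂ) * Complex.I * ((k : ℕ) : ℂ) * (r : ℂ) / (N : ℂ)
        + ((-((k : ℕ) * q : ℕ) : ℤ) : ℂ) * (2 * (Real.pi : ℂ) * Complex.I) from by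
          push_cast; field_simp; ring]
  rw [Complex.exp_add, Complex.exp_int_mul_two_pi_mul_I, mul_one]

lemma sqrtN_mul (N : ℕ) (hN : 0 < N) :
    ((Real.sqrt N : ℝ) : ℂ) * ((1 / Real.sqrt N : ℝ) : ℂ) = 1 := by
  have : Real.sqrt N ≠ 0 := by positivity
  rw [← Complex.ofReal_mul]
  field_simp
  exact Complex.ofReal_one

lemma dft_apply_add (N : ℕ) (hN : 0 < N) (k a b : Fin N) :
    dft N k (a + b) = ((Real.sqrt N : ℝ) : ℂ) * dft N k a * dft N k b := by
  have hN' : (N : ℂ) ≠ 0 := Nat.cast_ne_zero.mpr hN.ne'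
  simp only [dft, Matrix.of_apply]
  have hv : ((a + b : Fin N) : ℕ) = ((a : ℕ) + (b : ℕ)) % N := by
    simp [Fin.add_def]
  rw [hv, expE_mod N hN k ((a:ℕ)+(b:ℕ))]
  have h1 : (-2 * (Real.pi : ℂ) * Complex.I * ((k:ℕ):ℂ) * (((a:ℕ)+(b:ℕ) : ℕ):ℂ) / N)
      = (-2 * (Real.pi : ℂ) * Complex.I * ((k:ℕ):ℂ) * ((a:ℕ):ℂ) / N)
        + (-2 * (Real.pi : ℂ) * Complex.I * ((k:ℕ):ℂ) * ((b:ℕ):ℂ) / N) := by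
    push_cast; field_simp; ring
  rw [h1, Complex.exp_add]
  set c : ℂ := ((1 / Real.sqrt N : ℝ) : ℂ) with hc
  set e1 := Complex.exp (-2 * (Real.pi : ℂ) * Complex.I * ((k:ℕ):ℂ) * ((a:ℕ):ℂ) / N)
  set e2 := Complex.exp (-2 * (Real.pi : ℂ) * Complex.I * ((k:ℕ):ℂ) * ((b:ℕ):ℂ) / N)
  have : ((Real.sqrt N : ℝ) : ℂ) * (c * e1) * (c * e2)
      = (((Real.sqrt N : ℝ) : ℂ) * c) * (c * (e1 * e2)) := by ring
  rw [this, sqrtN_mul N hN, one_mul]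

lemma dft_mul_star (N : ℕ) (hN : 0 < N) (k n : Fin N) :
    dft N k n * star (dft N k n) = ((N : ℂ))⁻¹ := by
  have hN' : (N : ℂ) ≠ 0 := Nat.cast_ne_zero.mpr hN.ne'
  simp only [dft, Matrix.of_apply]
  set z : ℂ := -2 * (Real.pi : ℂ) * Complex.I * ((k:ℕ):ℂ) * ((n:ℕ):ℂ) / N with hz
  have hzr : z = ((-2 * Real.pi * ((k:ℕ):ℝ) * ((n:ℕ):ℝ) / (N:ℝ) : ℝ) : ℂ) * Complex.I := by
    rw [hz]; push_cast; ring
  have hstar : (starRingEnd ℂ) z = -z := by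
    rw [hzr, _root_.map_mul, Complex.conj_ofReal, Complex.conj_I]; ring
  rw [Complex.star_def, _root_.map_mul, Complex.conj_ofReal, ← Complex.exp_conj, hstar]
  have hexp : Complex.exp z * Complex.exp (-z) = 1 := by
    rw [← Complex.exp_add, add_neg_cancel, Complex.exp_zero]
  calc ((1 / Real.sqrt N : ℝ) : ℂ) * Complex.exp z *
        (((1 / Real.sqrt N : ℝ) : ℂ) * Complex.exp (-z))
      = (((1 / Real.sqrt N : ℝ) : ℂ) * ((1 / Real.sqrt N : ℝ) : ℂ))
        * (Complex.exp z * Complex.exp (-z)) := by ring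
    _ = ((N : ℂ))⁻¹ := by
        rw [hexp, mul_one, ← Complex.ofReal_mul]
        have : (1 / Real.sqrt N) * (1 / Real.sqrt N) = (N : ℝ)⁻¹ := by
          rw [div_mul_div_comm, one_mul, Real.mul_self_sqrt (by positivity)]
          simp
        rw [this, Complex.ofReal_inv, Complex.ofReal_natCast]

lemma dft_row_sum (N : ℕ) (hN : 0 < N) (k : Fin N) :
    ∑ n : Fin N, dft N k n * star (dft N k n) = 1 := by
  have hN' : (N : ℂ) ≠ 0 := Nat.cast_ne_zero.mpr hN.ne'
  simp only [dft_mul_star N hN k]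
  rw [Finset.sum_const, Finset.card_univ, Fintype.card_fin, nsmul_eq_mul,
    mul_inv_cancel₀ hN']

noncomputable def embedP (N P : ℕ) (δ : Fin P → ℂ) : Fin (N + P) → ℂ :=
  fun m => if hm : (m : ℕ) < P then δ ⟨m, hm⟩ else 0

lemma sum_fin_first (N P : ℕ) (f : Fin (N + P) → ℂ) (hf : ∀ m : Fin (N + P), P ≤ (m : ℕ) → f m = 0) :
    ∑ m, f m = ∑ m : Fin P, f ⟨(m : ℕ), by omega⟩ := by
  rw [← Finset.sum_subset (Finset.filter_subset (fun m : Fin (N + P) => (m : ℕ) < P) Finset.univ)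
    (fun m _ hm => hf m (by simpa using hm))]
  exact Finset.sum_bij' (i := fun m hm => (⟨(m : ℕ), by simpa using hm⟩ : Fin P))
    (j := fun m _ => (⟨(m : ℕ), by omega⟩ : Fin (N + P)))
    (fun a ha => Finset.mem_univ _)
    (fun a ha => by simp)
    (fun a ha => rfl) (fun a ha => rfl) (fun a ha => rfl)

lemma toep_embed (N L P : ℕ) (g : Fin L → ℂ) (δ : Fin P → ℂ) :
    toep N P g *ᵥ embedP N P δ = toepP N P g *ᵥ δ := by
  funext n
  simp only [mulVec, dotProduct]
  rw [sum_fin_first N P (fun m => toep N P g n m * embedP N P δ m)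
    (fun m hm => by simp [embedP, Nat.not_lt.mpr hm])]
  refine Finset.sum_congr rfl fun m _ => ?_
  have hm : ((⟨(m : ℕ), by omega⟩ : Fin (N + P)) : ℕ) < P := m.isLt
  simp only [embedP, toepP, Matrix.of_apply, dif_pos hm]

lemma decomp (N P : ℕ) (hPN : P ≤ N) (w : Fin (N + P) → ℂ) :
    w = cyclicPrefix N P hPN (wStar N P w) + embedP N P (deltaP N P hPN w) := by
  funext m
  simp only [Pi.add_apply, cyclicPrefix, wStar, deltaP, embedP]
  by_cases hm : (m : ℕ) < P
  · rw [dif_pos hm, dif_pos hm]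
    have h1 : (⟨(m : ℕ), by omega⟩ : Fin (N + P)) = m := rfl
    rw [h1]
    ring
  · rw [dif_neg hm, dif_neg hm, add_zero]
    congr 1
    ext
    simp only []
    omega

lemma toep_cp (N L P : ℕ) (hL : 1 ≤ L) (hLN : L ≤ N) (hP : L - 1 ≤ P) (hPN : P ≤ N)
    (g : Fin L → ℂ) (x : Fin N → ℂ) (n : Fin N) :
    (toep N P g *ᵥ cyclicPrefix N P hPN x) n = ∑ ℓ : Fin N, pad N hLN g ℓ * x (n - ℓ) := by
  simp only [mulVec, dotProduct, toep, pad, Matrix.of_apply]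
  rw [← Finset.sum_subset
      (Finset.filter_subset (fun m : Fin (N + P) =>
        (m : ℕ) ≤ P + (n : ℕ) ∧ P + (n : ℕ) < (m : ℕ) + L) Finset.univ)
      (fun m _ hm => by
        rw [dif_neg]
        · exact zero_mul _
        · simp only [Finset.mem_filter, Finset.mem_univ, true_and, not_and, not_lt] at hm
          omega)]
  rw [← Finset.sum_subset
      (Finset.filter_subset (fun ℓ : Fin N => (ℓ : ℕ) < L) Finset.univ)
      (fun ℓ _ hℓ => by
        rw [dif_neg (by simpa using hℓ)]
        exact zero_mul _)]
  refine Finset.sum_bij'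
    (i := fun m hm => (⟨P + (n : ℕ) - (m : ℕ), by
      simp only [Finset.mem_filter, Finset.mem_univ, true_and] at hm; omega⟩ : Fin N))
    (j := fun ℓ hℓ => (⟨P + (n : ℕ) - (ℓ : ℕ), by
      simp only [Finset.mem_filter, Finset.mem_univ, true_and] at hℓ
      have := n.isLt; omega⟩ : Fin (N + P)))
    (fun m hm => by
      simp only [Finset.mem_filter, Finset.mem_univ, true_and] at hm ⊢
      omega)
    (fun ℓ hℓ => by
      simp only [Finset.mem_filter, Finset.mem_univ, true_and] at hℓ ⊢
      omega)
    (fun m hm => by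
      simp only [Finset.mem_filter, Finset.mem_univ, true_and] at hm
      ext; simp only []; omega)
    (fun ℓ hℓ => by
      simp only [Finset.mem_filter, Finset.mem_univ, true_and] at hℓ
      ext; simp only []; omega)
    (fun m hm => by
      simp only [Finset.mem_filter, Finset.mem_univ, true_and] at hm
      have hcond : 0 ≤ (P : ℤ) + ((n : Fin N) : ℕ) - ((m : Fin (N+P)) : ℕ) ∧
          (P : ℤ) + ((n : Fin N) : ℕ) - ((m : Fin (N+P)) : ℕ) ≤ (L : ℤ) - 1 := by omega
      rw [dif_pos hcond, dif_pos (show P + (n : ℕ) - (m : ℕ) < L by omega)]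
      congr 1
      · congr 1
        ext
        simp only []
        omega
      · -- cyclicPrefix value equals x (n - i m)
        simp only [cyclicPrefix]
        by_cases hmP : (m : ℕ) < P
        · rw [dif_pos hmP]
          congr 1
          rw [Fin.sub_def]
          ext
          simp only []
          have h1 : (N - (P + (n:ℕ) - (m:ℕ)) + (n:ℕ)) % N = N - (P + (n:ℕ) - (m:ℕ)) + (n:ℕ) := by
            apply Nat.mod_eq_of_lt
            omega
          omega
        · rw [dif_neg hmP]
          congr 1
          rw [Fin.sub_def]
          ext
          simp only []
          have h2 : (N - (P + (n:ℕ) - (m:ℕ)) + (n:ℕ)) % N = (m:ℕ) - P := by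
            rw [show N - (P + (n:ℕ) - (m:ℕ)) + (n:ℕ) = N + ((m:ℕ) - P) by omega,
              Nat.add_mod_left, Nat.mod_eq_of_lt (by have := m.isLt; omega)]
          omega)

lemma circ_part (N L P : ℕ) (hL : 1 ≤ L) (hLN : L ≤ N) (hP : L - 1 ≤ P) (hPN : P ≤ N)
    (g : Fin L → ℂ) (x : Fin N → ℂ) (k : Fin N) :
    (dft N *ᵥ (toep N P g *ᵥ cyclicPrefix N P hPN x)) k
      = ((Real.sqrt N : ℝ) : ℂ) * (dft N *ᵥ pad N hLN g) k * (dft N *ᵥ x) k := by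
  have hN : 0 < N := by omega
  haveI : NeZero N := ⟨by omega⟩
  have step1 : (dft N *ᵥ (toep N P g *ᵥ cyclicPrefix N P hPN x)) k
      = ∑ n : Fin N, dft N k n * ∑ ℓ : Fin N, pad N hLN g ℓ * x (n - ℓ) := by
    simp only [mulVec, dotProduct]
    exact Finset.sum_congr rfl fun n _ => by
      rw [show ∑ m, toep N P g n m * cyclicPrefix N P hPN x m
          = (toep N P g *ᵥ cyclicPrefix N P hPN x) n from rfl,
        toep_cp N L P hL hLN hP hPN g x n]
  rw [step1]
  have step2 : ∀ n : Fin N, dft N k n * ∑ ℓ : Fin N, pad N hLN g ℓ * x (n - ℓ)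
      = ∑ ℓ : Fin N, pad N hLN g ℓ * (dft N k n * x (n - ℓ)) := by
    intro n; rw [Finset.mul_sum]; exact Finset.sum_congr rfl fun ℓ _ => by ring
  simp only [step2]
  rw [Finset.sum_comm]
  have step3 : ∀ ℓ : Fin N, ∑ n : Fin N, pad N hLN g ℓ * (dft N k n * x (n - ℓ))
      = pad N hLN g ℓ * (((Real.sqrt N : ℝ) : ℂ) * dft N k ℓ * ∑ m : Fin N, dft N k m * x m) := by
    intro ℓ
    rw [← Finset.mul_sum]
    congr 1
    have := Fintype.sum_equiv (Equiv.addRight ℓ)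
      (fun m : Fin N => dft N k (m + ℓ) * x m)
      (fun n : Fin N => dft N k n * x (n - ℓ))
      (fun m => by simp [Equiv.addRight])
    rw [← this]
    calc ∑ m : Fin N, dft N k (m + ℓ) * x m
        = ∑ m : Fin N, ((Real.sqrt N : ℝ) : ℂ) * dft N k ℓ * (dft N k m * x m) :=
          Finset.sum_congr rfl fun m _ => by rw [dft_apply_add N hN k m ℓ]; ring
      _ = ((Real.sqrt N : ℝ) : ℂ) * dft N k ℓ * ∑ m : Fin N, dft N k m * x m := by
          rw [← Finset.mul_sum]
  simp only [step3]
  simp only [mulVec, dotProduct]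
  calc ∑ ℓ : Fin N, pad N hLN g ℓ * (((Real.sqrt N : ℝ) : ℂ) * dft N k ℓ *
          ∑ m : Fin N, dft N k m * x m)
      = (∑ ℓ : Fin N, ((Real.sqrt N : ℝ) : ℂ) * (dft N k ℓ * pad N hLN g ℓ)) *
          ∑ m : Fin N, dft N k m * x m := by
        rw [Finset.sum_mul]
        exact Finset.sum_congr rfl fun ℓ _ => by ring
    _ = _ := by rw [← Finset.mul_sum]

lemma key (N L P : ℕ) (hL : 1 ≤ L) (hLN : L ≤ N) (hP : L - 1 ≤ P) (hPN : P ≤ N)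
    (g : Fin L → ℂ) (k : Fin N) (x : Fin N → ℂ) (δ : Fin P → ℂ) :
    (dft N *ᵥ (toep N P g *ᵥ (cyclicPrefix N P hPN x + embedP N P δ))) k =
      ((Real.sqrt N : ℝ) : ℂ) * (dft N *ᵥ pad N hLN g) k * (dft N *ᵥ x) k +
        ∑ m : Fin P, Matrix.vecMul (dft N k) (toepP N P g) m * δ m := by
  rw [mulVec_add, mulVec_add, Pi.add_apply, circ_part N L P hL hLN hP hPN g x k]
  congr 1
  rw [toep_embed N L P g δ, mulVec_mulVec]
  simp only [mulVec, dotProduct, Matrix.mul_apply, Matrix.vecMul, dotProduct]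

lemma effJ_mulVec (N L P B : ℕ) (hLN : L ≤ N) (h : Fin B → Fin L → ℂ) (k : Fin N)
    (v : Fin (P + 1) → ℂ) (b : Fin B) :
    (effJ N P B hLN h k *ᵥ v) b =
      ((Real.sqrt N : ℝ) : ℂ) * (dft N *ᵥ pad N hLN (h b)) k * v 0 +
        ∑ m : Fin P, Matrix.vecMul (dft N k) (toepP N P (h b)) m * v m.succ := by
  simp only [mulVec, dotProduct, effJ, Matrix.of_apply, Fin.sum_univ_succ, Fin.cons_zero,
    Fin.cons_succ]

/-- The range of the per-subcarrier interference map
`Φ_k : w ↦ (b ↦ (F · T(h_b) w)_k)` equals the column space of the effective jammer channel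
matrix `𝗝[k]`. -/
theorem stmt12 (N L P B : ℕ) (hL : 1 ≤ L) (hLN : L ≤ N) (hP : L - 1 ≤ P) (hPN : P ≤ N)
    (hB : 1 ≤ B) (h : Fin B → Fin L → ℂ) (k : Fin N) :
    Set.range (fun w : Fin (N + P) → ℂ =>
        fun b : Fin B => (dft N *ᵥ (toep N P (h b) *ᵥ w)) k) =
      Set.range (fun v : Fin (P + 1) → ℂ => effJ N P B hLN h k *ᵥ v) := by
  have hN : 0 < N := by omega
  ext y
  simp only [Set.mem_range]
  constructor
  · rintro ⟨w, rfl⟩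
    refine ⟨Fin.cons ((dft N *ᵥ wStar N P w) k) (deltaP N P hPN w), ?_⟩
    funext b
    rw [effJ_mulVec N L P B hLN h k _ b, Fin.cons_zero]
    conv_rhs => rw [decomp N P hPN w]
    rw [key N L P hL hLN hP hPN (h b) k _ _]
    simp only [Fin.cons_succ]
  · rintro ⟨v, rfl⟩
    refine ⟨cyclicPrefix N P hPN (fun n => v 0 * star (dft N k n))
        + embedP N P (fun m => v m.succ), ?_⟩
    funext b
    rw [key N L P hL hLN hP hPN (h b) k _ _, effJ_mulVec N L P B hLN h k v b]
    congr 2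
    simp only [mulVec, dotProduct]
    calc ∑ n, dft N k n * (v 0 * star (dft N k n))
        = ∑ n, v 0 * (dft N k n * star (dft N k n)) :=
          Finset.sum_congr rfl fun n _ => by ring
      _ = v 0 * ∑ n, dft N k n * star (dft N k n) := by rw [Finset.mul_sum]
      _ = v 0 := by rw [dft_row_sum N hN k, mul_one]
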